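/- For every complex t and fixed z, w, ν, α, ξ, the double series ∑_{m,n≥0} (u^m v^n)/(m! n!) · I_{m+n} equals exp(α(u+v)² + (u+v)·I_1), where I_1 = νw - 2αz - ξ. -/

import Mathlib

open Complex

noncomputable def Ic (ν α ξ z w : ℂ) : ℕ → ℂ
  | 0 => 1
  | 1 => ν * w - 2 * α * z - ξ
  | (n + 2) => (ν * w - 2 * α * z - ξ) * Ic ν α ξ z w (n + 1)
      + 2 * α * (n + 1) * Ic ν α ξ z w n

open Finset

variable {K : Type*} [Field K] [CharZero K]

noncomputable def Tg (a c : K) (m k : ℕ) : K :=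
  if 2 * k ≤ m then a ^ k * c ^ (m - 2 * k) / ((k.factorial : K) * ((m - 2 * k).factorial : K))
  else 0

noncomputable def Sg (a c : K) (n : ℕ) : K :=
  ∑ k ∈ Finset.range (n / 2 + 1),
    a ^ k * c ^ (n - 2 * k) / ((k.factorial : K) * ((n - 2 * k).factorial : K))

omit [CharZero K] in
lemma Sg_eq_sum_Tg (a c : K) (n : ℕ) :
    Sg a c n = ∑ k ∈ Finset.range (n + 1), Tg a c n k := by
  rw [Sg, ← Finset.sum_subset (Finset.range_subset_range.2 (by omega : n / 2 + 1 ≤ n + 1))]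
  · refine Finset.sum_congr rfl fun k hk => ?_
    rw [Finset.mem_range] at hk
    rw [Tg, if_pos (by omega)]
  · intro k _ hk
    rw [Finset.mem_range] at hk
    rw [Tg, if_neg (by omega)]

lemma Tg_rec (a c : K) (n k : ℕ) :
    ((n : K) + 2) * Tg a c (n + 2) (k + 1) = c * Tg a c (n + 1) (k + 1) + 2 * a * Tg a c n k := by
  rcases lt_or_ge n (2 * k) with h | h
  · rw [Tg, if_neg (by omega), Tg, if_neg (by omega), Tg, if_neg (by omega)]
    ring
  have hk0 : (k.factorial : K) ≠ 0 := Nat.cast_ne_zero.2 k.factorial_ne_zero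
  have hk1 : ((k : K) + 1) ≠ 0 := by
    have : (((k + 1 : ℕ)) : K) ≠ 0 := Nat.cast_ne_zero.2 (Nat.succ_ne_zero k)
    push_cast at this; exact this
  rcases eq_or_lt_of_le h with h' | h'
  · -- 2k = n
    subst h'
    rw [Tg, if_pos (by omega), Tg, if_neg (by omega), Tg, if_pos (by omega)]
    have e1 : 2 * k + 2 - 2 * (k + 1) = 0 := by omega
    have e2 : 2 * k - 2 * k = 0 := by omega
    rw [e1, e2, Nat.factorial_succ]
    push_cast
    field_simp
    ring
  · -- 2k < n
    obtain ⟨m, rfl⟩ : ∃ m, n = 2 * k + m + 1 := ⟨n - 2 * k - 1, by omega⟩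
    rw [Tg, if_pos (by omega), Tg, if_pos (by omega), Tg, if_pos (by omega)]
    have e1 : 2 * k + m + 1 + 2 - 2 * (k + 1) = m + 1 := by omega
    have e2 : 2 * k + m + 1 + 1 - 2 * (k + 1) = m := by omega
    have e3 : 2 * k + m + 1 - 2 * k = m + 1 := by omega
    rw [e1, e2, e3, Nat.factorial_succ (k), Nat.factorial_succ (m)]
    have hm0 : ((m.factorial : K)) ≠ 0 := Nat.cast_ne_zero.2 m.factorial_ne_zero
    have hm1 : ((m : K) + 1) ≠ 0 := by
      have : (((m + 1 : ℕ)) : K) ≠ 0 := Nat.cast_ne_zero.2 (Nat.succ_ne_zero m)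
      push_cast at this; exact this
    push_cast
    field_simp
    ring

lemma Tg_zero (a c : K) (m : ℕ) :
    Tg a c m 0 = c ^ m / ((m.factorial : K)) := by
  rw [Tg, if_pos (by omega)]
  simp

lemma Sg_rec (a c : K) (n : ℕ) :
    ((n : K) + 2) * Sg a c (n + 2) = c * Sg a c (n + 1) + 2 * a * Sg a c n := by
  rw [Sg_eq_sum_Tg, Sg_eq_sum_Tg, Sg_eq_sum_Tg, Finset.mul_sum, Finset.mul_sum, Finset.mul_sum]
  rw [show n + 2 + 1 = (n + 2) + 1 from rfl,
    Finset.sum_range_succ' (fun k => ((n : K) + 2) * Tg a c (n + 2) k) (n + 2)]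
  rw [Finset.sum_congr rfl (fun k _ => Tg_rec a c n k), Finset.sum_add_distrib]
  have h0 : ((n : K) + 2) * Tg a c (n + 2) 0 = c * Tg a c (n + 1) 0 := by
    rw [Tg_zero, Tg_zero, Nat.factorial_succ (n + 1), Nat.cast_mul, pow_succ]
    have h1 : (((n + 1).factorial : K)) ≠ 0 := Nat.cast_ne_zero.2 (Nat.factorial_ne_zero _)
    have h2 : (((n + 2 : ℕ)) : K) ≠ 0 := Nat.cast_ne_zero.2 (by omega)
    rw [show ((n : K) + 2) = ((n + 2 : ℕ) : K) by push_cast; ring, mul_div_assoc',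
      mul_div_mul_left _ _ h2, mul_div_assoc']
    ring
  have hA : ∑ x ∈ Finset.range (n + 2), c * Tg a c (n + 1) (x + 1) + c * Tg a c (n + 1) 0
      = ∑ i ∈ Finset.range (n + 1 + 1), c * Tg a c (n + 1) i := by
    rw [← Finset.sum_range_succ' (fun k => c * Tg a c (n + 1) k) (n + 2),
      Finset.sum_range_succ]
    rw [show Tg a c (n + 1) (n + 2) = 0 from by rw [Tg, if_neg (by omega)]]
    ring_nf
  have h2 : ∑ k ∈ Finset.range (n + 2), 2 * a * Tg a c n k
      = ∑ k ∈ Finset.range (n + 1), 2 * a * Tg a c n k := by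
    rw [Finset.sum_range_succ, Tg, if_neg (by omega)]
    simp
  rw [h0, h2, ← hA]
  ring

lemma binom_div (x y : K) (N : ℕ) :
    ∑ k ∈ Finset.range (N + 1),
      x ^ k * y ^ (N - k) / ((k.factorial : K) * ((N - k).factorial : K))
      = (x + y) ^ N / (N.factorial : K) := by
  rw [add_pow, Finset.sum_div]
  refine Finset.sum_congr rfl fun k hk => ?_
  rw [Finset.mem_range] at hk
  rw [Nat.cast_choose K (by omega : k ≤ N)]
  have h1 : (k.factorial : K) ≠ 0 := Nat.cast_ne_zero.2 k.factorial_ne_zero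
  have h2 : ((N - k).factorial : K) ≠ 0 := Nat.cast_ne_zero.2 (Nat.factorial_ne_zero _)
  have h3 : (N.factorial : K) ≠ 0 := Nat.cast_ne_zero.2 N.factorial_ne_zero
  field_simp


lemma Ic_eq_Sg (ν α ξ z w : ℂ) (n : ℕ) :
    Ic ν α ξ z w n = (n.factorial : ℂ) * Sg α (ν * w - 2 * α * z - ξ) n := by
  induction n using Nat.twoStepInduction with
  | zero => simp [Ic, Sg]
  | one => simp [Ic, Sg]
  | more n ih1 ih2 =>
    have h := Sg_rec α (ν * w - 2 * α * z - ξ) n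
    show (ν * w - 2 * α * z - ξ) * Ic ν α ξ z w (n + 1)
        + 2 * α * (n + 1) * Ic ν α ξ z w n = _
    rw [ih1, ih2, Nat.factorial_succ (n + 1), Nat.factorial_succ n]
    push_cast
    linear_combination (-(((n : ℂ) + 1) * (n.factorial : ℂ))) * h

def eHalf : (Σ n : ℕ, Fin (n / 2 + 1)) ≃ ℕ × ℕ where
  toFun q := (q.2.1, q.1 - 2 * q.2.1)
  invFun p := ⟨2 * p.1 + p.2, ⟨p.1, by omega⟩⟩
  left_inv := by
    rintro ⟨n, ⟨k, hk⟩⟩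
    have h2 : 2 * k ≤ n := by omega
    have hn : 2 * k + (n - 2 * k) = n := by omega
    dsimp only
    exact Sigma.ext hn ((Fin.heq_ext_iff (by dsimp only; omega)).2 rfl)
  right_inv := by
    rintro ⟨j, m⟩
    simp

def eDiag : (Σ n : ℕ, Fin (n + 1)) ≃ ℕ × ℕ where
  toFun q := (q.2.1, q.1 - q.2.1)
  invFun p := ⟨p.1 + p.2, ⟨p.1, by omega⟩⟩
  left_inv := by
    rintro ⟨n, ⟨k, hk⟩⟩
    have hn : k + (n - k) = n := by omega
    dsimp only
    exact Sigma.ext hn ((Fin.heq_ext_iff (by dsimp only; omega)).2 rfl)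
  right_inv := by
    rintro ⟨j, m⟩
    simp

lemma keySum (a c s : ℂ) :
    HasSum (fun n => s ^ n * Sg a c n) (Complex.exp (a * s ^ 2 + s * c)) := by
  have hf : HasSum (fun j => (a * s ^ 2) ^ j / (j.factorial : ℂ)) (Complex.exp (a * s ^ 2)) := by
    rw [Complex.exp_eq_exp_ℂ]; exact NormedSpace.expSeries_div_hasSum_exp _
  have hg : HasSum (fun m => (s * c) ^ m / (m.factorial : ℂ)) (Complex.exp (s * c)) := by
    rw [Complex.exp_eq_exp_ℂ]; exact NormedSpace.expSeries_div_hasSum_exp _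
  have hfn : Summable fun j => ‖(a * s ^ 2) ^ j / (j.factorial : ℂ)‖ := by
    refine (Real.summable_pow_div_factorial ‖a * s ^ 2‖).congr fun n => ?_
    rw [norm_div, norm_pow, Complex.norm_natCast]
  have hgn : Summable fun m => ‖(s * c) ^ m / (m.factorial : ℂ)‖ := by
    refine (Real.summable_pow_div_factorial ‖s * c‖).congr fun n => ?_
    rw [norm_div, norm_pow, Complex.norm_natCast]
  have hmul := hf.mul hg ((hfn.mul_norm hgn).of_norm)
  rw [← Complex.exp_add] at hmul
  have hσ := (eHalf.hasSum_iff).2 hmul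
  have h3 := hσ.sigma (fun n => hasSum_fintype _)
  refine h3.congr_fun fun n => ?_
  dsimp [eHalf]
  rw [Fin.sum_univ_eq_sum_range
    (fun k => (a * s ^ 2) ^ k / (k.factorial : ℂ) * ((s * c) ^ (n - 2 * k) / (((n - 2 * k).factorial : ℂ)))),
    Sg, Finset.mul_sum]
  refine Finset.sum_congr rfl fun k hk => ?_
  rw [Finset.mem_range] at hk
  have h2 : 2 * k ≤ n := by omega
  have hs : s ^ (2 * k) * s ^ (n - 2 * k) = s ^ n := by
    rw [← pow_add]; congr 1; omega
  rw [mul_pow, mul_pow, ← pow_mul, ← hs]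
  ring

lemma Sg_ofReal (a b : ℝ) (n : ℕ) :
    ((Sg a b n : ℝ) : ℂ) = Sg (a : ℂ) (b : ℂ) n := by
  rw [Sg, Sg]
  push_cast
  rfl

lemma Sg_nonneg {a b : ℝ} (ha : 0 ≤ a) (hb : 0 ≤ b) (n : ℕ) : 0 ≤ Sg a b n :=
  Finset.sum_nonneg fun k _ => by
    have h1 : (0:ℝ) < (k.factorial : ℝ) := by positivity
    have h2 : (0:ℝ) < ((n - 2*k).factorial : ℝ) := by positivity
    positivity

lemma norm_Sg_le (a c : ℂ) (n : ℕ) : ‖Sg a c n‖ ≤ Sg ‖a‖ ‖c‖ n := by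
  rw [Sg, Sg]
  refine (norm_sum_le _ _).trans_eq (Finset.sum_congr rfl fun k _ => ?_)
  rw [norm_div, norm_mul, norm_mul, norm_pow, norm_pow, Complex.norm_natCast,
    Complex.norm_natCast]

theorem stmt5 (ν α ξ z w u v : ℂ) :
    HasSum (fun p : ℕ × ℕ =>
        u ^ p.1 * v ^ p.2 / ((p.1.factorial : ℂ) * (p.2.factorial : ℂ)) *
          Ic ν α ξ z w (p.1 + p.2))
      (Complex.exp (α * (u + v) ^ 2 + (u + v) * (ν * w - 2 * α * z - ξ))) := by
  set cc := ν * w - 2 * α * z - ξ with hcc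
  set M : ℕ × ℕ → ℝ := fun p =>
    ‖u‖ ^ p.1 * ‖v‖ ^ p.2 / ((p.1.factorial : ℝ) * (p.2.factorial : ℝ)) *
      (((p.1 + p.2).factorial : ℝ) * Sg ‖α‖ ‖cc‖ (p.1 + p.2)) with hM
  have hRsum : Summable fun N : ℕ => (‖u‖ + ‖v‖) ^ N * Sg ‖α‖ ‖cc‖ N := by
    have h := (keySum (‖α‖ : ℂ) (‖cc‖ : ℂ) ((‖u‖ + ‖v‖ : ℝ) : ℂ)).summable
    rw [← Complex.summable_ofReal]
    refine h.congr fun N => ?_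
    rw [Complex.ofReal_mul, Complex.ofReal_pow, Sg_ofReal]
  have hMnonneg : ∀ q : Σ N : ℕ, Fin (N + 1), 0 ≤ M (eDiag q) := by
    intro q
    have := Sg_nonneg (norm_nonneg α) (norm_nonneg cc) ((eDiag q).1 + (eDiag q).2)
    have h1 : (0:ℝ) < ((eDiag q).1.factorial : ℝ) := by positivity
    have h2 : (0:ℝ) < ((eDiag q).2.factorial : ℝ) := by positivity
    rw [hM]
    positivity
  have hMsum : Summable M := by
    rw [← eDiag.summable_iff]
    refine (summable_sigma_of_nonneg hMnonneg).2 ⟨fun N => (hasSum_fintype _).summable, ?_⟩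
    refine hRsum.congr fun N => ?_
    rw [tsum_fintype]
    have hre : ∀ k : Fin (N + 1), M (eDiag ⟨N, k⟩) = (fun j => M (j, N - j)) (k : ℕ) :=
      fun k => rfl
    rw [Finset.sum_congr rfl fun k _ => hre k,
      Fin.sum_univ_eq_sum_range (fun j => M (j, N - j)) (N + 1)]
    have hterm : ∀ j ∈ Finset.range (N + 1), M (j, N - j)
        = ‖u‖ ^ j * ‖v‖ ^ (N - j) / ((j.factorial : ℝ) * ((N - j).factorial : ℝ))
          * ((N.factorial : ℝ) * Sg ‖α‖ ‖cc‖ N) := by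
      intro j hj
      rw [Finset.mem_range] at hj
      rw [hM]
      dsimp only
      rw [show j + (N - j) = N by omega]
    rw [Finset.sum_congr rfl hterm, ← Finset.sum_mul, binom_div]
    have hN : (N.factorial : ℝ) ≠ 0 := Nat.cast_ne_zero.2 N.factorial_ne_zero
    field_simp
  have hbound : ∀ p : ℕ × ℕ,
      ‖u ^ p.1 * v ^ p.2 / ((p.1.factorial : ℂ) * (p.2.factorial : ℂ)) *
        Ic ν α ξ z w (p.1 + p.2)‖ ≤ M p := by
    intro p
    rw [Ic_eq_Sg, ← hcc, hM]
    dsimp only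
    simp only [norm_mul, norm_div, norm_pow, Complex.norm_natCast]
    gcongr
    exact norm_Sg_le α cc _
  have hFsum : Summable (fun p : ℕ × ℕ =>
      u ^ p.1 * v ^ p.2 / ((p.1.factorial : ℂ) * (p.2.factorial : ℂ)) *
        Ic ν α ξ z w (p.1 + p.2)) :=
    Summable.of_norm_bounded hMsum hbound
  have hF := hFsum.hasSum
  have hgrp := ((eDiag.hasSum_iff).2 hF).sigma (fun N => hasSum_fintype _)
  have hgrp' : HasSum (fun N => (u + v) ^ N * Sg α cc N)
      (∑' p : ℕ × ℕ, u ^ p.1 * v ^ p.2 / ((p.1.factorial : ℂ) * (p.2.factorial : ℂ)) *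
        Ic ν α ξ z w (p.1 + p.2)) := by
    refine hgrp.congr_fun fun N => ?_
    simp only [Function.comp_apply]
    have hre : ∀ k : Fin (N + 1),
        (u ^ ((eDiag ⟨N, k⟩).1) * v ^ ((eDiag ⟨N, k⟩).2) /
          (((eDiag ⟨N, k⟩).1.factorial : ℂ) * ((eDiag ⟨N, k⟩).2.factorial : ℂ)) *
          Ic ν α ξ z w ((eDiag ⟨N, k⟩).1 + (eDiag ⟨N, k⟩).2))
        = (fun j => u ^ j * v ^ (N - j) / ((j.factorial : ℂ) * ((N - j).factorial : ℂ)) *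
            Ic ν α ξ z w (j + (N - j))) (k : ℕ) := fun k => rfl
    rw [Finset.sum_congr rfl fun k _ => hre k,
      Fin.sum_univ_eq_sum_range
        (fun j => u ^ j * v ^ (N - j) / ((j.factorial : ℂ) * ((N - j).factorial : ℂ)) *
          Ic ν α ξ z w (j + (N - j))) (N + 1)]
    have hterm : ∀ j ∈ Finset.range (N + 1),
        u ^ j * v ^ (N - j) / ((j.factorial : ℂ) * ((N - j).factorial : ℂ)) *
          Ic ν α ξ z w (j + (N - j))
        = u ^ j * v ^ (N - j) / ((j.factorial : ℂ) * ((N - j).factorial : ℂ)) *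
          ((N.factorial : ℂ) * Sg α cc N) := by
      intro j hj
      rw [Finset.mem_range] at hj
      rw [show j + (N - j) = N by omega, Ic_eq_Sg, ← hcc]
    rw [Finset.sum_congr rfl hterm, ← Finset.sum_mul, binom_div]
    have hN : (N.factorial : ℂ) ≠ 0 := Nat.cast_ne_zero.2 N.factorial_ne_zero
    field_simp
  have hkey := keySum α cc (u + v)
  have heq := hgrp'.unique hkey
  rw [← heq]
  exact hF
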